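/- arXiv:2007.01162 — 2 statements merged into one kernel-verified Lean document; each statement's English description precedes it below -/
import Mathlib

section
/- In the GLM setting, the optimal tilted objective is nondecreasing in the tilt: if t ≤ t' are real numbers, θ* minimizes θ ↦ R̃(t;θ) over ℝ^d and θ*' minimizes θ ↦ R̃(t';θ) over ℝ^d, then R̃(t;θ*) ≤ R̃(t';θ*'). -/
open Real Finset

lemma aux_pos {N : ℕ} (hN : 0 < N) (y : Fin N → ℝ) :
    0 < (1 / (N : ℝ)) * ∑ i, Real.exp (y i) := by
  have : 0 < ∑ i, Real.exp (y i) :=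
    Finset.sum_pos (fun i _ => Real.exp_pos _)
      (by simpa using Finset.univ_nonempty_iff.2 (Fin.pos_iff_nonempty.mp hN))
  positivity

lemma aux_jensen {N : ℕ} (hN : 0 < N) (x : Fin N → ℝ) {s : ℝ} (hs : 0 < s) :
    (1 / (N : ℝ)) * ∑ i, x i ≤ (1 / s) * Real.log ((1 / (N : ℝ)) * ∑ i, Real.exp (s * x i)) := by
  set S := (1 / (N : ℝ)) * ∑ i, Real.exp (s * x i) with hS
  have hpos : 0 < S := aux_pos hN _
  have h1 : Real.exp (s * ((1 / (N : ℝ)) * ∑ i, x i)) ≤ S := by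
    have := convexOn_exp.map_sum_le (t := Finset.univ) (w := fun _ : Fin N => 1 / (N : ℝ))
      (p := fun i => s * x i) (fun i _ => by positivity)
      (by simp [Finset.sum_const, Finset.card_univ]; field_simp) (fun i _ => Set.mem_univ _)
    simp only [smul_eq_mul] at this
    calc Real.exp (s * ((1 / (N : ℝ)) * ∑ i, x i))
        = Real.exp (∑ i, (1 / (N : ℝ)) * (s * x i)) := by
          congr 1
          rw [Finset.mul_sum, Finset.mul_sum]
          exact Finset.sum_congr rfl fun i _ => by ring
      _ ≤ ∑ i, (1 / (N : ℝ)) * Real.exp (s * x i) := this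
      _ = S := by rw [hS, Finset.mul_sum]
  have h2 : s * ((1 / (N : ℝ)) * ∑ i, x i) ≤ Real.log S := (Real.le_log_iff_exp_le hpos).2 h1
  calc (1 / (N : ℝ)) * ∑ i, x i = (1 / s) * (s * ((1 / (N : ℝ)) * ∑ i, x i)) := by
        field_simp
    _ ≤ (1 / s) * Real.log S := by
        apply mul_le_mul_of_nonneg_left h2; positivity

lemma aux_pm {N : ℕ} (hN : 0 < N) (x : Fin N → ℝ) {s s' : ℝ} (hs : 0 < s) (hss' : s ≤ s') :
    (1 / s) * Real.log ((1 / (N : ℝ)) * ∑ i, Real.exp (s * x i)) ≤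
      (1 / s') * Real.log ((1 / (N : ℝ)) * ∑ i, Real.exp (s' * x i)) := by
  have hs' : 0 < s' := lt_of_lt_of_le hs hss'
  set S := (1 / (N : ℝ)) * ∑ i, Real.exp (s * x i) with hSdef
  set S' := (1 / (N : ℝ)) * ∑ i, Real.exp (s' * x i) with hS'def
  have hSpos : 0 < S := aux_pos hN _
  have hS'pos : 0 < S' := aux_pos hN _
  have hp : 1 ≤ s' / s := (one_le_div hs).2 hss'
  have key : S ≤ S' ^ (s / s') := by
    have := Real.arith_mean_le_rpow_mean (s := Finset.univ) (fun _ : Fin N => 1 / (N : ℝ))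
      (fun i => Real.exp (s * x i)) (fun i _ => by positivity)
      (by simp [Finset.sum_const, Finset.card_univ]; field_simp)
      (fun i _ => (Real.exp_pos _).le) hp
    have hz : ∀ i : Fin N, Real.exp (s * x i) ^ (s' / s) = Real.exp (s' * x i) := by
      intro i
      rw [← Real.exp_mul]
      congr 1; field_simp
    simp only [hz] at this
    have h1 : 1 / (s' / s) = s / s' := by field_simp
    calc S = ∑ i, (1 / (N : ℝ)) * Real.exp (s * x i) := by rw [hSdef, Finset.mul_sum]
      _ ≤ (∑ i, (1 / (N : ℝ)) * Real.exp (s' * x i)) ^ (1 / (s' / s)) := this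
      _ = S' ^ (s / s') := by rw [h1, hS'def, Finset.mul_sum]
  have hlog : Real.log S ≤ (s / s') * Real.log S' := by
    calc Real.log S ≤ Real.log (S' ^ (s / s')) := Real.log_le_log hSpos key
      _ = (s / s') * Real.log S' := Real.log_rpow hS'pos _
  calc (1 / s) * Real.log S ≤ (1 / s) * ((s / s') * Real.log S') := by
        apply mul_le_mul_of_nonneg_left hlog; positivity
    _ = (1 / s') * Real.log S' := by field_simp

lemma aux_mono {N : ℕ} (hN : 0 < N) (x : Fin N → ℝ) {t t' : ℝ} (htt' : t ≤ t') :
    (if t = 0 then (1 / (N : ℝ)) * ∑ i, x i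
      else (1 / t) * Real.log ((1 / (N : ℝ)) * ∑ i, Real.exp (t * x i))) ≤
    (if t' = 0 then (1 / (N : ℝ)) * ∑ i, x i
      else (1 / t') * Real.log ((1 / (N : ℝ)) * ∑ i, Real.exp (t' * x i))) := by
  -- negative-side lemma derived from aux_jensen / aux_pm applied to -x
  have hneg_j : ∀ {u : ℝ}, u < 0 →
      (1 / u) * Real.log ((1 / (N : ℝ)) * ∑ i, Real.exp (u * x i)) ≤ (1 / (N : ℝ)) * ∑ i, x i := by
    intro u hu
    have := aux_jensen hN (fun i => -x i) (s := -u) (by linarith)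
    simp only [mul_neg, neg_mul, neg_neg, ← Finset.sum_neg_distrib] at this
    have h2 : (1 / (N : ℝ)) * ∑ i, -x i = -((1 / (N : ℝ)) * ∑ i, x i) := by
      rw [Finset.sum_neg_distrib]; ring
    rw [h2] at this
    have h3 : (1 / (-u)) = -(1 / u) := by ring
    rw [h3] at this
    linarith
  have hneg_pm : ∀ {u u' : ℝ}, u ≤ u' → u' < 0 →
      (1 / u) * Real.log ((1 / (N : ℝ)) * ∑ i, Real.exp (u * x i)) ≤
        (1 / u') * Real.log ((1 / (N : ℝ)) * ∑ i, Real.exp (u' * x i)) := by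
    intro u u' huu' hu'
    have := aux_pm hN (fun i => -x i) (s := -u') (s' := -u) (by linarith) (by linarith)
    have h4 : ∀ (v : ℝ) i, -v * -x i = v * x i := fun v i => by ring
    simp only [h4] at this
    have h3 : ∀ v : ℝ, (1 : ℝ) / (-v) = -(1 / v) := fun v => by ring
    rw [h3, h3] at this
    linarith
  by_cases ht : t = 0
  · by_cases ht' : t' = 0
    · simp [ht, ht']
    · have ht'pos : 0 < t' := lt_of_le_of_ne (ht ▸ htt') (Ne.symm ht')
      rw [if_pos ht, if_neg ht']
      exact aux_jensen hN x ht'pos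
  · by_cases ht' : t' = 0
    · have htneg : t < 0 := lt_of_le_of_ne (ht' ▸ htt') ht
      rw [if_neg ht, if_pos ht']
      exact hneg_j htneg
    · rw [if_neg ht, if_neg ht']
      rcases lt_trichotomy t 0 with htn | h0 | htp
      · rcases lt_trichotomy t' 0 with ht'n | h0' | ht'p
        · exact hneg_pm htt' ht'n
        · exact absurd h0' ht'
        · exact le_trans (hneg_j htn) (aux_jensen hN x ht'p)
      · exact absurd h0 ht
      · exact aux_pm hN x htp htt'

/-- The `t`-tilted GLM loss, with losses `fᵢ(θ) = A(θ) − ⟨θ,Tᵢ⟩`: for `t ≠ 0`,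
`R̃(t;θ) = (1/t)·log((1/N)·Σᵢ exp(t·fᵢ(θ)))`, extended by `R̃(0;θ) = (1/N)·Σᵢ fᵢ(θ)`. -/
noncomputable def glmTiltedLoss {d N : ℕ} (T : Fin N → EuclideanSpace ℝ (Fin d))
    (A : EuclideanSpace ℝ (Fin d) → ℝ) (t : ℝ) (θ : EuclideanSpace ℝ (Fin d)) : ℝ :=
  if t = 0 then (1 / (N : ℝ)) * ∑ i, (A θ - (inner ℝ θ (T i) : ℝ))
  else (1 / t) * Real.log ((1 / (N : ℝ)) * ∑ i, Real.exp (t * (A θ - (inner ℝ θ (T i) : ℝ))))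

/-- **The optimal tilted objective is nondecreasing in the tilt.** In the GLM setting, if
`t ≤ t'`, `θ*` minimizes `θ ↦ R̃(t;θ)` over `ℝ^d`, and `θ*'` minimizes `θ ↦ R̃(t';θ)` over
`ℝ^d`, then `R̃(t;θ*) ≤ R̃(t';θ*')`. -/
theorem glm_optimal_tilted_objective_monotone {d N : ℕ} (hN : 0 < N)
    (T : Fin N → EuclideanSpace ℝ (Fin d))
    (A : EuclideanSpace ℝ (Fin d) → ℝ) (hA : ContDiff ℝ 2 A)
    (t t' : ℝ) (htt' : t ≤ t')
    (θstar θstar' : EuclideanSpace ℝ (Fin d))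
    (hmin : ∀ θ : EuclideanSpace ℝ (Fin d), glmTiltedLoss T A t θstar ≤ glmTiltedLoss T A t θ)
    (hmin' : ∀ θ : EuclideanSpace ℝ (Fin d),
      glmTiltedLoss T A t' θstar' ≤ glmTiltedLoss T A t' θ) :
    glmTiltedLoss T A t θstar ≤ glmTiltedLoss T A t' θstar' := by
  have h1 : glmTiltedLoss T A t θstar ≤ glmTiltedLoss T A t θstar' := hmin θstar'
  have h2 : glmTiltedLoss T A t θstar' ≤ glmTiltedLoss T A t' θstar' :=
    aux_mono hN (fun i => A θstar' - (inner ℝ θstar' (T i) : ℝ)) htt'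
  linarith
end

section
/- Fix θ ∈ ℝ^d and let c ∈ ℝ satisfy c ≤ f_i(θ) for all i ∈ [N] (in the paper, c is the global minimum F̃(−∞) = min_θ min_i f_i(θ)). Then for every t ≠ 0 and every a > c, the fraction of losses exceeding a is bounded by a function of the tilted objective: Q(a;θ) ≤ (exp(t·R̃(t;θ)) − exp(t·c)) / (exp(t·a) − exp(t·c)), where Q(a;θ) := (1/N)·#{i ∈ [N] : f_i(θ) ≥ a}. -/
open Real Finset

/-- The `t`-tilted empirical loss for `t ≠ 0`:
`R̃(t;θ) = (1/t)·log((1/N)·Σᵢ exp(t·fᵢ(θ)))`. -/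
noncomputable def tiltedLoss {d N : ℕ} (f : Fin N → EuclideanSpace ℝ (Fin d) → ℝ) (t : ℝ)
    (θ : EuclideanSpace ℝ (Fin d)) : ℝ :=
  (1 / t) * Real.log ((1 / (N : ℝ)) * ∑ i, Real.exp (t * f i θ))

/-- **Quantile bound via the tilted objective.** Fix `θ` and let `c` be a lower bound on all
losses at `θ` (in the paper, `c = F̃(−∞)` is the global minimum loss). Then for every `t ≠ 0`
and every `a > c`, the fraction `Q(a;θ)` of losses at least `a` satisfies
`Q(a;θ) ≤ (exp(t·R̃(t;θ)) − exp(t·c)) / (exp(t·a) − exp(t·c))`. -/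
theorem tilted_quantile_bound {d N : ℕ} (hN : 0 < N)
    (f : Fin N → EuclideanSpace ℝ (Fin d) → ℝ) (θ : EuclideanSpace ℝ (Fin d))
    (c : ℝ) (hc : ∀ i, c ≤ f i θ)
    (t : ℝ) (ht : t ≠ 0) (a : ℝ) (ha : c < a) :
    ((Finset.univ.filter fun i => a ≤ f i θ).card : ℝ) / (N : ℝ) ≤
      (Real.exp (t * tiltedLoss f t θ) - Real.exp (t * c)) /
        (Real.exp (t * a) - Real.exp (t * c)) := by
  have hNpos : (0 : ℝ) < N := by exact_mod_cast hN
  set S : ℝ := (1 / (N : ℝ)) * ∑ i, Real.exp (t * f i θ) with hSdef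
  have hSpos : 0 < S := by
    apply mul_pos (by positivity)
    apply Finset.sum_pos (fun i _ => Real.exp_pos _)
    exact ⟨⟨0, hN⟩, Finset.mem_univ _⟩
  have hexp : Real.exp (t * tiltedLoss f t θ) = S := by
    unfold tiltedLoss
    rw [← mul_assoc, mul_one_div, div_self ht, one_mul, Real.exp_log hSpos]
  rw [hexp]
  set D : ℝ := Real.exp (t * a) - Real.exp (t * c) with hDdef
  have key : ∀ i : Fin N,
      (if a ≤ f i θ then (1 : ℝ) else 0) ≤ (Real.exp (t * f i θ) - Real.exp (t * c)) / D := by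
    intro i
    rcases lt_or_gt_of_ne ht with htneg | htpos
    · have hD : D < 0 := by
        have : Real.exp (t * a) < Real.exp (t * c) := by
          apply Real.exp_lt_exp.2
          nlinarith
        simpa [hDdef] using sub_neg.2 this
      split_ifs with h
      · rw [le_div_iff_of_neg hD]
        have : Real.exp (t * f i θ) ≤ Real.exp (t * a) := by
          apply Real.exp_le_exp.2; nlinarith
        simpa [hDdef] using this
      · have hnum : Real.exp (t * f i θ) - Real.exp (t * c) ≤ 0 := by
          have : Real.exp (t * f i θ) ≤ Real.exp (t * c) := by
            apply Real.exp_le_exp.2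
            have := hc i; nlinarith
          linarith
        have := div_nonneg (neg_nonneg.2 hnum) (neg_nonneg.2 hD.le)
        rw [neg_div_neg_eq] at this
        exact this
    · have hD : 0 < D := by
        have : Real.exp (t * c) < Real.exp (t * a) := by
          apply Real.exp_lt_exp.2; nlinarith
        simpa [hDdef] using sub_pos.2 this
      split_ifs with h
      · rw [le_div_iff₀ hD]
        have : Real.exp (t * a) ≤ Real.exp (t * f i θ) := by
          apply Real.exp_le_exp.2; nlinarith
        simpa [hDdef] using this
      · apply div_nonneg _ hD.le
        have : Real.exp (t * c) ≤ Real.exp (t * f i θ) := by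
          apply Real.exp_le_exp.2
          have := hc i; nlinarith
        linarith
  have hcard : ((Finset.univ.filter fun i => a ≤ f i θ).card : ℝ) =
      ∑ i, (if a ≤ f i θ then (1 : ℝ) else 0) := by
    rw [Finset.card_filter]
    push_cast
    rfl
  have hsum : (S - Real.exp (t * c)) / D =
      (1 / (N : ℝ)) * ∑ i, (Real.exp (t * f i θ) - Real.exp (t * c)) / D := by
    rw [← Finset.sum_div, Finset.sum_sub_distrib]
    simp only [hSdef, Finset.sum_const, Finset.card_univ, Fintype.card_fin, nsmul_eq_mul]
    field_simp
  rw [hsum, hcard, div_eq_inv_mul, ← one_div]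
  apply mul_le_mul_of_nonneg_left _ (by positivity)
  exact Finset.sum_le_sum fun i _ => key i
end
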